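/- Let D be a Hom-finite k-linear triangulated category with Serre functor S, and let C be an admissible triangulated subcategory with inclusion i_* : C → D having left adjoint i^* and right adjoint i^!. Then i^! ∘ S ∘ i_* is a Serre functor of C, with quasi-inverse i^* ∘ S^{-1} ∘ i_*. -/

import Mathlib

open CategoryTheory CategoryTheory.Limits CategoryTheory.Pretriangulated

universe v u

variable (k : Type*) [Field k]

/-- A Serre functor on a Hom-finite `k`-linear (triangulated) category: an (exact)
autoequivalence `E` together with functorial isomorphisms
`Hom(X, Y) ≅ (Hom(Y, E X))ᵛ`. -/
structure SerreFunctorData (C : Type u) [Category.{v} C] [Preadditive C] [Linear k C] where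
  /-- the underlying autoequivalence -/
  E : C ≌ C
  /-- the Serre duality pairing `Hom(X, Y) ≅ D Hom(Y, S X)` -/
  pairing : ∀ X Y : C, (X ⟶ Y) ≃ₗ[k] Module.Dual k (Y ⟶ E.functor.obj X)
  /-- naturality of the pairing in the second variable -/
  naturality_right : ∀ {X Y Y' : C} (g : X ⟶ Y) (u : Y ⟶ Y') (h : Y' ⟶ E.functor.obj X),
    pairing X Y' (g ≫ u) h = pairing X Y g (u ≫ h)
  /-- naturality of the pairing in the first variable -/
  naturality_left : ∀ {X X' Y : C} (v : X' ⟶ X) (g : X ⟶ Y) (h : Y ⟶ E.functor.obj X'),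
    pairing X' Y (v ≫ g) h = pairing X Y g (h ≫ E.functor.map v)

variable {C : Type u} [Category.{v} C] [Preadditive C] [Linear k C]
  [HasZeroObject C] [HasShift C ℤ] [∀ n : ℤ, (shiftFunctor C n).Additive] [Pretriangulated C]
  [∀ X Y : C, FiniteDimensional k (X ⟶ Y)]

namespace SerreAdmissibleAux

universe v' u'

variable {k : Type*} [Field k]

lemma sep {V W : Type*} [AddCommGroup V] [Module k V] [AddCommGroup W] [Module k W]
    (p : V ≃ₗ[k] Module.Dual k W) {m m' : W} (h : ∀ v, p v m = p v m') : m = m' := by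
  rw [← sub_eq_zero, ← Module.forall_dual_apply_eq_zero_iff k (m - m')]
  intro φ
  have h2 := h (p.symm φ)
  rw [p.apply_symm_apply] at h2
  simp [h2]

variable {C : Type u'} [Category.{v'} C] [Preadditive C] [CategoryTheory.Linear k C]
  [∀ X Y : C, FiniteDimensional k (X ⟶ Y)]

variable (σ : SerreFunctorData k C) {P : C → Prop}
  (L R : C ⥤ ObjectProperty.FullSubcategory P)
  (adjL : L ⊣ ObjectProperty.ι P)
  (adjR : ObjectProperty.ι P ⊣ R)

/-- Morphisms of the full subcategory as morphisms of the ambient category. -/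
def homE (X Y : ObjectProperty.FullSubcategory P) : (X ⟶ Y) ≃ₗ[k] (X.obj ⟶ Y.obj) where
  toFun f := f.hom
  map_add' _ _ := rfl
  map_smul' _ _ := rfl
  invFun g := ObjectProperty.homMk g
  left_inv _ := rfl
  right_inv _ := rfl

@[simp] lemma hom_add' {X Y : ObjectProperty.FullSubcategory P} (f g : X ⟶ Y) :
    (f + g).hom = f.hom + g.hom := rfl

@[simp] lemma hom_smul' {X Y : ObjectProperty.FullSubcategory P} (r : k) (f : X ⟶ Y) :
    (r • f).hom = r • f.hom := rfl

instance subFinDim (X Y : ObjectProperty.FullSubcategory P) : FiniteDimensional k (X ⟶ Y) :=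
  LinearEquiv.finiteDimensional (homE X Y).symm

/-- The candidate Serre functor on the subcategory. -/
def FS : ObjectProperty.FullSubcategory P ⥤ ObjectProperty.FullSubcategory P :=
  ObjectProperty.ι P ⋙ σ.E.functor ⋙ R

/-- The candidate inverse Serre functor on the subcategory. -/
def GS : ObjectProperty.FullSubcategory P ⥤ ObjectProperty.FullSubcategory P :=
  ObjectProperty.ι P ⋙ σ.E.inverse ⋙ L

/-- Restriction along the right adjoint, as a linear equivalence. -/
noncomputable def resR (X : ObjectProperty.FullSubcategory P) (Z : C) :
    (X ⟶ R.obj Z) ≃ₗ[k] (X.obj ⟶ Z) where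
  toFun h := (ObjectProperty.ι P).map h ≫ adjR.counit.app Z
  map_add' f g := by simp [ObjectProperty.ι_map]
  map_smul' r f := by simp [ObjectProperty.ι_map]
  invFun g := adjR.homEquiv X Z g
  left_inv h := by
    show adjR.homEquiv X Z ((ObjectProperty.ι P).map h ≫ adjR.counit.app Z) = h
    rw [← Adjunction.homEquiv_counit]
    exact (adjR.homEquiv X Z).apply_symm_apply h
  right_inv g := by
    show (ObjectProperty.ι P).map (adjR.homEquiv X Z g) ≫ adjR.counit.app Z = g
    rw [← Adjunction.homEquiv_counit adjR X Z (adjR.homEquiv X Z g)]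
    exact (adjR.homEquiv X Z).symm_apply_apply g

/-- Restriction along the left adjoint, as a linear equivalence. -/
noncomputable def resL (Z : C) (X : ObjectProperty.FullSubcategory P) :
    (L.obj Z ⟶ X) ≃ₗ[k] (Z ⟶ X.obj) where
  toFun h := adjL.unit.app Z ≫ (ObjectProperty.ι P).map h
  map_add' f g := by simp [ObjectProperty.ι_map]
  map_smul' r f := by simp [ObjectProperty.ι_map]
  invFun g := (adjL.homEquiv Z X).symm g
  left_inv h := by
    show (adjL.homEquiv Z X).symm (adjL.unit.app Z ≫ (ObjectProperty.ι P).map h) = h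
    rw [← Adjunction.homEquiv_unit adjL Z X h]
    exact (adjL.homEquiv Z X).symm_apply_apply h
  right_inv g := by
    show adjL.unit.app Z ≫ (ObjectProperty.ι P).map ((adjL.homEquiv Z X).symm g) = g
    rw [← Adjunction.homEquiv_unit adjL Z X ((adjL.homEquiv Z X).symm g)]
    exact (adjL.homEquiv Z X).apply_symm_apply g

/-- The Serre pairing on the subcategory. -/
noncomputable def pairF (X Y : ObjectProperty.FullSubcategory P) :
    (X ⟶ Y) ≃ₗ[k] Module.Dual k (Y ⟶ (FS σ R).obj X) :=
  (homE X Y).trans <| (σ.pairing X.obj Y.obj).trans (resR R adjR Y (σ.E.functor.obj X.obj)).dualMap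

lemma pairF_apply {X Y : ObjectProperty.FullSubcategory P} (g : X ⟶ Y) (h : Y ⟶ (FS σ R).obj X) :
    pairF σ R adjR X Y g h =
      σ.pairing X.obj Y.obj ((ObjectProperty.ι P).map g)
        ((ObjectProperty.ι P).map h ≫ adjR.counit.app (σ.E.functor.obj X.obj)) :=
  rfl

set_option linter.unusedSectionVars false

lemma pairF_natr {X Y Y' : ObjectProperty.FullSubcategory P} (g : X ⟶ Y) (u : Y ⟶ Y')
    (h : Y' ⟶ (FS σ R).obj X) :
    pairF σ R adjR X Y' (g ≫ u) h = pairF σ R adjR X Y g (u ≫ h) := by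
  rw [pairF_apply, pairF_apply, Functor.map_comp, σ.naturality_right, Functor.map_comp]
  exact congrArg _ (Category.assoc _ _ _).symm

lemma pairF_natl {X X' Y : ObjectProperty.FullSubcategory P} (v : X' ⟶ X) (g : X ⟶ Y)
    (h : Y ⟶ (FS σ R).obj X') :
    pairF σ R adjR X' Y (v ≫ g) h = pairF σ R adjR X Y g (h ≫ (FS σ R).map v) := by
  rw [pairF_apply, pairF_apply, Functor.map_comp, σ.naturality_left, Functor.map_comp]
  have hc := adjR.counit.naturality (σ.E.functor.map ((ObjectProperty.ι P).map v))
  simp only [Functor.id_map, Functor.comp_map, ObjectProperty.ι_obj] at hc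
  congr 1
  refine (Category.assoc _ _ _).trans ?_
  exact (congrArg ((ObjectProperty.ι P).map h ≫ ·) hc.symm).trans (Category.assoc _ _ _).symm

lemma pairF_shift {X Y : ObjectProperty.FullSubcategory P} (g : X ⟶ Y) (h : Y ⟶ (FS σ R).obj X) :
    pairF σ R adjR X Y g h = pairF σ R adjR Y Y (𝟙 Y) (h ≫ (FS σ R).map g) := by
  have h1 := pairF_natl σ R adjR g (𝟙 Y) h
  rwa [Category.comp_id] at h1

lemma sepF (Y : ObjectProperty.FullSubcategory P) {A : ObjectProperty.FullSubcategory P} {w w' : A ⟶ (FS σ R).obj Y}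
    (hw : ∀ h : Y ⟶ A, pairF σ R adjR Y Y (𝟙 Y) (h ≫ w) = pairF σ R adjR Y Y (𝟙 Y) (h ≫ w')) :
    w = w' := by
  refine (resR (k := k) R adjR A (σ.E.functor.obj Y.obj)).injective ?_
  refine sep (σ.pairing Y.obj A.obj) (fun v => ?_)
  have key : ∀ t : A ⟶ (FS σ R).obj Y,
      σ.pairing Y.obj A.obj v (resR (k := k) R adjR A (σ.E.functor.obj Y.obj) t)
        = pairF σ R adjR Y Y (𝟙 Y) ((ObjectProperty.homMk v : Y ⟶ A) ≫ t) := by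
    intro t
    rw [pairF_apply, Functor.map_comp]
    erw [Category.assoc]
    conv_lhs => rw [← Category.id_comp v]
    rw [σ.naturality_right]
    rfl
  rw [key w, key w']
  exact hw _

include adjR in
lemma FS_faithful : (FS σ R).Faithful where
  map_injective {X Y g g'} hm := by
    apply (pairF σ R adjR X Y).injective
    apply LinearMap.ext
    intro h
    show pairF σ R adjR X Y g h = pairF σ R adjR X Y g' h
    rw [pairF_shift σ R adjR g h, hm, ← pairF_shift σ R adjR g' h]

include adjR in
lemma FS_full : (FS σ R).Full where
  map_surjective {X Y} t := by
    refine ⟨(pairF σ R adjR X Y).symm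
      (((pairF σ R adjR Y Y) (𝟙 Y)).comp (Linear.rightComp k Y t)), ?_⟩
    apply sepF σ R adjR Y
    intro h
    rw [← pairF_shift]
    have := (pairF σ R adjR X Y).apply_symm_apply
      (((pairF σ R adjR Y Y) (𝟙 Y)).comp (Linear.rightComp k Y t))
    rw [this]
    rfl

/-- Post-composition with the counit of the Serre equivalence. -/
noncomputable def postEquiv (X Y : ObjectProperty.FullSubcategory P) :
    (X ⟶ Y) ≃ₗ[k] (X.obj ⟶ σ.E.functor.obj (σ.E.inverse.obj Y.obj)) where
  toFun f := (ObjectProperty.ι P).map f ≫ σ.E.counitIso.inv.app Y.obj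
  map_add' f g := by simp [ObjectProperty.ι_map]
  map_smul' r f := by simp [ObjectProperty.ι_map]
  invFun g := ObjectProperty.homMk (g ≫ σ.E.counitIso.hom.app Y.obj : X.obj ⟶ Y.obj)
  left_inv h := by
    show ObjectProperty.homMk (((ObjectProperty.ι P).map h ≫ σ.E.counitIso.inv.app Y.obj) ≫
      σ.E.counitIso.hom.app Y.obj) = h
    ext
    simp [ObjectProperty.ι_map]
  right_inv g := by
    show (ObjectProperty.ι P).map
      (ObjectProperty.homMk (g ≫ σ.E.counitIso.hom.app Y.obj : X.obj ⟶ Y.obj)) ≫ σ.E.counitIso.inv.app Y.obj = g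
    simp [ObjectProperty.ι_map]

/-- The co-Serre pairing on the subcategory. -/
noncomputable def pairG (X Y : ObjectProperty.FullSubcategory P) :
    (X ⟶ Y) ≃ₗ[k] Module.Dual k ((GS σ L).obj Y ⟶ X) :=
  (Module.evalEquiv k (X ⟶ Y)).trans
    (((resL (k := k) L adjL (σ.E.inverse.obj Y.obj) X).trans
      ((σ.pairing (σ.E.inverse.obj Y.obj) X.obj).trans
        (postEquiv σ X Y).dualMap)).dualMap)

lemma pairG_apply {X Y : ObjectProperty.FullSubcategory P} (f : X ⟶ Y) (h : (GS σ L).obj Y ⟶ X) :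
    pairG σ L adjL X Y f h =
      σ.pairing (σ.E.inverse.obj Y.obj) X.obj
        (adjL.unit.app (σ.E.inverse.obj Y.obj) ≫ (ObjectProperty.ι P).map h)
        ((ObjectProperty.ι P).map f ≫ σ.E.counitIso.inv.app Y.obj) :=
  rfl

lemma pairG_shift {X Y : ObjectProperty.FullSubcategory P} (g : X ⟶ Y) (h : (GS σ L).obj Y ⟶ X) :
    pairG σ L adjL X Y g h = pairG σ L adjL X X (𝟙 X) ((GS σ L).map g ≫ h) := by
  rw [pairG_apply, pairG_apply]
  erw [Functor.map_comp, CategoryTheory.Functor.map_id]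
  simp only [ObjectProperty.ι_obj]
  rw [Category.id_comp]
  have hu := adjL.unit.naturality (σ.E.inverse.map ((ObjectProperty.ι P).map g))
  simp only [Functor.id_map, Functor.comp_map, ObjectProperty.ι_obj] at hu
  have hgs : (ObjectProperty.ι P).map ((GS σ L).map g)
      = (ObjectProperty.ι P).map
          (L.map (σ.E.inverse.map ((ObjectProperty.ι P).map g))) := rfl
  have hci := σ.E.counitIso.inv.naturality ((ObjectProperty.ι P).map g)
  simp only [Functor.id_map, Functor.comp_map, ObjectProperty.ι_obj] at hci
  conv_rhs => erw [hgs, ← Category.assoc, ← hu, Category.assoc, σ.naturality_left, ← hci]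
  rfl

lemma sepG (X : ObjectProperty.FullSubcategory P) {A : ObjectProperty.FullSubcategory P} {w w' : (GS σ L).obj X ⟶ A}
    (hw : ∀ h : A ⟶ X,
      pairG σ L adjL X X (𝟙 X) (w ≫ h) = pairG σ L adjL X X (𝟙 X) (w' ≫ h)) :
    w = w' := by
  have key : ∀ (t : (GS σ L).obj X ⟶ A) (v : A.obj ⟶ X.obj),
      pairG σ L adjL X X (𝟙 X) (t ≫ (ObjectProperty.homMk v : A ⟶ X))
        = σ.pairing A.obj X.obj v
            (σ.E.counitIso.inv.app X.obj ≫
              σ.E.functor.map (adjL.unit.app (σ.E.inverse.obj X.obj) ≫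
                (ObjectProperty.ι P).map t)) := by
    intro t v
    rw [pairG_apply]
    erw [Functor.map_comp, CategoryTheory.Functor.map_id]
    simp only [ObjectProperty.ι_obj]
    rw [Category.id_comp, ← Category.assoc, σ.naturality_left]
    rfl
  have h2 : σ.E.counitIso.inv.app X.obj ≫
        σ.E.functor.map (adjL.unit.app (σ.E.inverse.obj X.obj) ≫
          (ObjectProperty.ι P).map w)
      = σ.E.counitIso.inv.app X.obj ≫
        σ.E.functor.map (adjL.unit.app (σ.E.inverse.obj X.obj) ≫
          (ObjectProperty.ι P).map w') := by
    refine sep (σ.pairing A.obj X.obj) (fun v => ?_)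
    rw [← key w v, ← key w' v]
    exact hw _
  rw [cancel_epi] at h2
  have h3 := σ.E.functor.map_injective h2
  exact (resL (k := k) L adjL (σ.E.inverse.obj X.obj) A).injective h3

include adjL in
lemma GS_faithful : (GS σ L).Faithful where
  map_injective {X Y g g'} hm := by
    apply (pairG σ L adjL X Y).injective
    apply LinearMap.ext
    intro h
    show pairG σ L adjL X Y g h = pairG σ L adjL X Y g' h
    rw [pairG_shift σ L adjL g h, hm, ← pairG_shift σ L adjL g' h]

include adjL in
lemma GS_full : (GS σ L).Full where
  map_surjective {X Y} t := by
    refine ⟨(pairG σ L adjL X Y).symm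
      (((pairG σ L adjL X X) (𝟙 X)).comp (Linear.leftComp k X t)), ?_⟩
    apply sepG σ L adjL X
    intro h
    rw [← pairG_shift]
    have := (pairG σ L adjL X Y).apply_symm_apply
      (((pairG σ L adjL X X) (𝟙 X)).comp (Linear.leftComp k X t))
    rw [this]
    rfl

/-- The adjunction `GS ⊣ FS`, obtained by composing `adjR`, the Serre equivalence and
`adjL`. -/
noncomputable def adjGF : GS σ L ⊣ FS σ R :=
  (adjR.comp σ.E.symm.toAdjunction).comp adjL

/-- The equivalence underlying the Serre functor on the subcategory. -/
noncomputable def subEquiv : ObjectProperty.FullSubcategory P ≌ ObjectProperty.FullSubcategory P := by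
  haveI := FS_full σ R adjR
  haveI := FS_faithful σ R adjR
  haveI := GS_full σ L adjL
  haveI := GS_faithful σ L adjL
  exact (adjGF σ L R adjL adjR).toEquivalence.symm

end SerreAdmissibleAux

/-- Let `D` be a Hom-finite `k`-linear triangulated category with Serre functor `S`, and let
`C` be an admissible subcategory, i.e. the inclusion `i_* : C → D` has a left adjoint `i^*`
and a right adjoint `i^!`.  Then `i^! ∘ S ∘ i_*` is a Serre functor of `C`, with quasi-inverse
`i^* ∘ S⁻¹ ∘ i_*`. -/
theorem serreFunctor_of_admissible
    (σ : SerreFunctorData k C) (P : C → Prop)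
    -- `C` is a strictly full triangulated subcategory:
    (hiso : ∀ X Y : C, (X ≅ Y) → P X → P Y)
    (hshift : ∀ (X : C) (n : ℤ), P X → P (X⟦n⟧))
    (htri : ∀ T : Pretriangulated.Triangle C, (T ∈ distTriang C) →
      P T.obj₁ → P T.obj₂ → P T.obj₃)
    -- admissibility: a left adjoint `L = i^*` and a right adjoint `R = i^!` of the inclusion
    (L R : C ⥤ ObjectProperty.FullSubcategory P)
    (adjL : L ⊣ ObjectProperty.ι P)
    (adjR : ObjectProperty.ι P ⊣ R) :
    ∃ σ' : SerreFunctorData k (ObjectProperty.FullSubcategory P),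
      Nonempty (σ'.E.functor ≅ ObjectProperty.ι P ⋙ σ.E.functor ⋙ R) ∧
      Nonempty (σ'.E.inverse ≅ ObjectProperty.ι P ⋙ σ.E.inverse ⋙ L) := by
  exact ⟨{ E := SerreAdmissibleAux.subEquiv σ L R adjL adjR,
           pairing := SerreAdmissibleAux.pairF σ R adjR,
           naturality_right := fun g u h => SerreAdmissibleAux.pairF_natr σ R adjR g u h,
           naturality_left := fun v g h => SerreAdmissibleAux.pairF_natl σ R adjR v g h },
        ⟨Iso.refl _⟩, ⟨Iso.refl _⟩⟩
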